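/- Let (X,d) be a geometrically doubling metric space with doubling constant M and let n ∈ ℕ, n ≥ 1. Then for every δ ∈ (0, 1/(n·168·M⁸)) there exist K ∈ ℕ (depending only on δ and M) and dyadic systems D(1), …, D(K) with parameter δ, such that: for every p ∈ ℕ and all balls B₁, B₂, …, B_n in X there exist ω ∈ {1,…,K} and cubes Q_{B₁}, …, Q_{B_n} ∈ D(ω) such that for every i ∈ {1,…,n}: (i) B_i ⊆ Q_{B_i}; (ii) ℓ(Q_{B_i}) ≤ δ^(−2)·r(B_i), where r(B_i) is the radius of B_i; (iii) δ^(−p)·B_i ⊆ Q_{B_i}^{(p)}, where δ^(−p)·B_i is the ball concentric with B_i of δ^(−p) times its radius and Q_{B_i}^{(p)} is the unique ancestor of Q_{B_i} in D(ω) of level lev(Q_{B_i}) − p. -/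

import Mathlib

open Metric

/-- A metric space is geometrically doubling with constant `M` if every open ball of radius `r`
can be covered by at most `M` open balls of radius `r / 2`. -/
def GeomDoubling (X : Type*) [MetricSpace X] (M : ℕ) : Prop :=
  ∀ (x : X) (r : ℝ), ∃ s : Finset X, s.card ≤ M ∧ ball x r ⊆ ⋃ y ∈ s, ball y (r / 2)

/-- A dyadic system with parameter `δ ∈ (0,1)`: a countable collection of cubes `cube k z`
with centre points `idx k` forming maximal `δ^k`-separated sets, satisfying the standard
properties of dyadic cubes. -/
structure DyadicSystem (X : Type*) [MetricSpace X] (δ : ℝ) where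
  idx : ℤ → Set X
  cube : ℤ → X → Set X
  countable : ∀ k, (idx k).Countable
  separated : ∀ k : ℤ, ∀ z ∈ idx k, ∀ w ∈ idx k, z ≠ w → δ ^ k ≤ dist z w
  maximal : ∀ (k : ℤ) (x : X), ∃ z ∈ idx k, dist x z < δ ^ k
  covers : ∀ k : ℤ, (⋃ z ∈ idx k, cube k z) = Set.univ
  tree : ∀ (k l : ℤ) (z w : X), z ∈ idx k → w ∈ idx l →
    cube k z ∩ cube l w = ∅ ∨ cube k z ⊆ cube l w ∨ cube l w ⊆ cube k z
  ball_subset : ∀ k : ℤ, ∀ z ∈ idx k, ball z (δ ^ k / 5) ⊆ cube k z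
  subset_ball : ∀ k : ℤ, ∀ z ∈ idx k, cube k z ⊆ ball z (3 * δ ^ k)
  union_descendants : ∀ (k : ℤ) (m : ℕ), ∀ z ∈ idx k,
    cube k z = ⋃ w ∈ {w ∈ idx (k + (m : ℤ)) | cube (k + (m : ℤ)) w ⊆ cube k z},
      cube (k + (m : ℤ)) w

open Set

namespace Adj

variable {X : Type} [MetricSpace X]

lemma cover_pow {M : ℕ} (hGD : GeomDoubling X M) (x : X) (r : ℝ) (j : ℕ) :
    ∃ F : Finset X, F.card ≤ M ^ j ∧ ball x r ⊆ ⋃ y ∈ F, ball y (r / 2 ^ j) := by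
  classical
  induction j with
  | zero =>
    exact ⟨{x}, by simp, by simp⟩
  | succ j ih =>
    obtain ⟨F, hFcard, hFsub⟩ := ih
    choose G hGcard hGsub using fun y : X => hGD y (r / 2 ^ j)
    refine ⟨F.biUnion G, ?_, ?_⟩
    · calc (F.biUnion G).card ≤ ∑ y ∈ F, (G y).card := Finset.card_biUnion_le
        _ ≤ ∑ _y ∈ F, M := Finset.sum_le_sum fun y _ => hGcard y
        _ = F.card * M := by simp [Finset.sum_const, Nat.smul_one_eq_cast]
        _ ≤ M ^ j * M := Nat.mul_le_mul_right _ hFcard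
        _ = M ^ (j + 1) := by ring
    · intro z hz
      obtain ⟨y, hy, hzy⟩ := Set.mem_iUnion₂.1 (hFsub hz)
      obtain ⟨w, hw, hzw⟩ := Set.mem_iUnion₂.1 (hGsub y hzy)
      refine Set.mem_iUnion₂.2 ⟨w, Finset.mem_biUnion.2 ⟨y, hy, hw⟩, ?_⟩
      have : r / 2 ^ j / 2 = r / 2 ^ (j + 1) := by ring
      rwa [this] at hzw

/-- points of a `Λ`-separated set within an open ball of radius `R` : finite, with card `≤ M^j`
provided `2*R ≤ 2^j * Λ`. -/
lemma sep_count {M : ℕ} (hGD : GeomDoubling X M) {A : Set X} {Λ : ℝ}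
    (hsep : ∀ z ∈ A, ∀ w ∈ A, z ≠ w → Λ ≤ dist z w) (x : X) (R : ℝ) (j : ℕ)
    (hjR : 2 * R ≤ 2 ^ j * Λ) :
    {z ∈ A | dist x z < R}.Finite ∧ {z ∈ A | dist x z < R}.ncard ≤ M ^ j := by
  obtain ⟨F, hFcard, hFsub⟩ := cover_pow hGD x R j
  set S := {z ∈ A | dist x z < R} with hS
  have hmem : ∀ z ∈ S, ∃ y ∈ F, z ∈ ball y (R / 2 ^ j) := by
    intro z hz
    have : z ∈ ball x R := by rw [mem_ball, dist_comm]; exact hz.2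
    simpa using hFsub this
  choose φ hφF hφball using hmem
  classical
  let ψ : X → X := fun z => if hz : z ∈ S then φ z hz else x
  have hψinj : S.InjOn ψ := by
    intro a ha b hb hab
    by_contra hne
    have h1 : a ∈ ball (ψ a) (R / 2 ^ j) := by simp only [ψ, dif_pos ha]; exact hφball a ha
    have h2 : b ∈ ball (ψ a) (R / 2 ^ j) := by
      have : b ∈ ball (ψ b) (R / 2 ^ j) := by simp only [ψ, dif_pos hb]; exact hφball b hb
      rwa [← hab] at this
    have hd : dist a b < 2 * (R / 2 ^ j) := by
      calc dist a b ≤ dist a (ψ a) + dist (ψ a) b := dist_triangle _ _ _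
        _ < R / 2 ^ j + R / 2 ^ j := by
            rw [mem_ball] at h1 h2
            rw [dist_comm (ψ a) b]; exact add_lt_add h1 h2
        _ = 2 * (R / 2 ^ j) := by ring
    have h2p : (0:ℝ) < 2 ^ j := by positivity
    have : Λ ≤ dist a b := hsep a ha.1 b hb.1 hne
    have : Λ < 2 * (R / 2 ^ j) := lt_of_le_of_lt this hd
    have : 2 ^ j * Λ < 2 * R := by
      rw [mul_comm] at this
      calc 2 ^ j * Λ < 2 ^ j * (R / 2 ^ j * 2) := by
            apply mul_lt_mul_of_pos_left _ h2p
            linarith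
        _ = 2 * R := by field_simp
    linarith
  have hψF : ∀ z ∈ S, ψ z ∈ (F : Set X) := by
    intro z hz; simp only [ψ, dif_pos hz]; exact_mod_cast hφF z hz
  have hfin : S.Finite := by
    have himg : (ψ '' S) ⊆ (F : Set X) := by rintro _ ⟨z, hz, rfl⟩; exact hψF z hz
    have : (ψ '' S).Finite := F.finite_toSet.subset himg
    exact Set.Finite.of_finite_image this hψinj
  refine ⟨hfin, ?_⟩
  calc S.ncard = (ψ '' S).ncard := (Set.ncard_image_of_injOn hψinj).symm
    _ ≤ (F : Set X).ncard := Set.ncard_le_ncard (by rintro _ ⟨z, hz, rfl⟩; exact hψF z hz)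
        F.finite_toSet
    _ = F.card := by simp [Set.ncard_coe_finset]
    _ ≤ M ^ j := hFcard

/-- existence of a maximal `Λ`-separated set -/
lemma exists_maximal_separated (Λ : ℝ) (hΛ : 0 < Λ) :
    ∃ A : Set X, (∀ z ∈ A, ∀ w ∈ A, z ≠ w → Λ ≤ dist z w) ∧
      (∀ x : X, ∃ z ∈ A, dist x z < Λ) := by
  classical
  set S : Set (Set X) := {B | ∀ z ∈ B, ∀ w ∈ B, z ≠ w → Λ ≤ dist z w} with hSdef
  obtain ⟨A, hA⟩ := zorn_subset S (by
    intro c hcS hchain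
    refine ⟨⋃₀ c, ?_, fun s hs => Set.subset_sUnion_of_mem hs⟩
    intro z hz w hw hzw
    obtain ⟨s, hs, hzs⟩ := hz
    obtain ⟨t, ht, hwt⟩ := hw
    rcases hchain.total hs ht with h | h
    · exact hcS ht z (h hzs) w hwt hzw
    · exact hcS hs z hzs w (h hwt) hzw)
  refine ⟨A, hA.prop, ?_⟩
  intro x
  by_contra hx
  push_neg at hx
  have hxA : x ∉ A := by
    intro hmem
    have := hx x hmem
    simp at this
    linarith
  have hins : insert x A ∈ S := by
    intro z hz w hw hzw
    rcases hz with rfl | hz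
    · rcases hw with rfl | hw
      · exact absurd rfl hzw
      · exact hx w hw
    · rcases hw with rfl | hw
      · rw [dist_comm]; exact hx z hz
      · exact hA.prop z hz w hw hzw
  have := hA.eq_of_subset hins (Set.subset_insert x A)
  rw [this] at hxA
  exact hxA (Set.mem_insert x A)

/-- `GeomDoubling X 1` forces `X` to be a subsingleton. -/
lemma subsingleton_of_geomDoubling_one (hGD : GeomDoubling X 1) : Subsingleton X := by
  constructor
  intro a b
  by_contra hab
  have hd : 0 < dist a b := dist_pos.2 hab
  set r : ℝ := dist a b + 1 with hr
  obtain ⟨m, hm⟩ : ∃ m : ℕ, r / 2 ^ m < dist a b / 2 := by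
    obtain ⟨m, hm⟩ := pow_unbounded_of_one_lt (r / (dist a b / 2)) (by norm_num : (1:ℝ) < 2)
    refine ⟨m, ?_⟩
    have h2 : (0:ℝ) < 2 ^ m := by positivity
    rw [div_lt_iff₀ (by linarith : (0:ℝ) < dist a b / 2)] at hm
    rw [div_lt_iff₀ h2]
    linarith [hm]
  obtain ⟨F, hFcard, hFsub⟩ := cover_pow hGD a r m
  have ha : a ∈ ball a r := mem_ball_self (by rw [hr]; linarith)
  have hb : b ∈ ball a r := by rw [mem_ball, hr, dist_comm]; linarith
  obtain ⟨y, hyF, hay⟩ := Set.mem_iUnion₂.1 (hFsub ha)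
  obtain ⟨y', hy'F, hby⟩ := Set.mem_iUnion₂.1 (hFsub hb)
  have hyy : y = y' := by
    have h1 : F.card ≤ 1 ^ m := hFcard
    have : F.card ≤ 1 := by simpa using h1
    have := Finset.card_le_one.1 this
    exact this y hyF y' hy'F
  rw [mem_ball] at hay hby
  have : dist a b < dist a b := by
    calc dist a b ≤ dist a y' + dist b y' := dist_triangle_right _ _ _
      _ < r / 2 ^ m + r / 2 ^ m := by rw [← hyy]; exact add_lt_add (hyy ▸ hay) (hyy ▸ hby)
      _ < dist a b / 2 + dist a b / 2 := add_lt_add hm hm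
      _ = dist a b := by ring
  exact lt_irrefl _ this

end Adj

namespace Adj

variable {X : Type} [MetricSpace X]

/-- ultrafilter picks a value from a finite-range function -/
lemma ult_exists {α : Type} (U : Ultrafilter ℕ) (S : Finset α) (f : ℕ → α)
    (hf : {n | f n ∈ S} ∈ U) : ∃ v ∈ S, {n | f n = v} ∈ U := by
  classical
  induction S using Finset.induction with
  | empty => exfalso; simp only [Finset.notMem_empty, Set.setOf_false] at hf
             exact Ultrafilter.empty_notMem hf
  | @insert v S hv ih =>
      have hsplit : {n | f n ∈ insert v S} = {n | f n = v} ∪ {n | f n ∈ S} := by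
        ext m; simp [Finset.mem_insert]
      rw [hsplit] at hf
      rcases (Ultrafilter.union_mem_iff).1 hf with h | h
      · exact ⟨v, Finset.mem_insert_self _ _, h⟩
      · obtain ⟨w, hw1, hw2⟩ := ih h
        exact ⟨w, Finset.mem_insert_of_mem hw1, hw2⟩

structure Setup (X : Type) [MetricSpace X] (δ : ℝ) (M : ℕ) where
  hδ0 : 0 < δ
  hδ1 : δ ≤ 1/336
  hGD : GeomDoubling X M
  A : ℤ → Set X
  hsep : ∀ s : ℤ, ∀ z ∈ A s, ∀ w ∈ A s, z ≠ w → δ ^ s ≤ dist z w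
  hmax : ∀ (s : ℤ) (x : X), ∃ z ∈ A s, dist x z < δ ^ s
  θ : ℝ
  hθ1 : 1/10 ≤ θ
  hθ2 : θ ≤ 1/2

namespace Setup

variable {δ : ℝ} {M : ℕ} (P : Setup X δ M)

include P in
lemma hΛ (s : ℤ) : 0 < δ ^ s := zpow_pos P.hδ0 s

include P in
lemma hΛsucc (s : ℤ) : δ ^ (s + 1) = δ ^ s * δ := zpow_add_one₀ P.hδ0.ne' s

/-- distance to the nearest centre of level `s` -/
noncomputable def e (s : ℤ) (x : X) : ℝ := infDist x (P.A s)

lemma A_nonempty (s : ℤ) (x : X) : (P.A s).Nonempty :=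
  (P.hmax s x).imp fun z hz => hz.1

lemma e_le (s : ℤ) (x z : X) (hz : z ∈ P.A s) : P.e s x ≤ dist x z :=
  infDist_le_dist_of_mem hz

lemma e_lt (s : ℤ) (x : X) : P.e s x < δ ^ s := by
  obtain ⟨z, hz, hdz⟩ := P.hmax s x
  exact lt_of_le_of_lt (P.e_le s x z hz) hdz

lemma e_nonneg (s : ℤ) (x : X) : 0 ≤ P.e s x := infDist_nonneg

lemma e_lip (s : ℤ) (x y : X) : P.e s x ≤ P.e s y + dist x y :=
  infDist_le_infDist_add_dist

/-- admissible parents of a point -/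
def adm (s : ℤ) (w : X) : Set X := {z | z ∈ P.A s ∧ dist w z < P.e s w + P.θ * δ ^ s}

lemma e_lt_add (s : ℤ) (w : X) {c : ℝ} (hc : 0 < c) :
    ∃ z ∈ P.A s, dist w z < P.e s w + c := by
  have h : infDist w (P.A s) < P.e s w + c := by
    have he : P.e s w = infDist w (P.A s) := rfl
    rw [← he]; linarith
  exact (infDist_lt_iff (P.A_nonempty s w)).1 h

lemma adm_nonempty (s : ℤ) (w : X) : (P.adm s w).Nonempty := by
  have hpos : 0 < P.θ * δ ^ s := by
    have h0 := P.hΛ s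
    have h1 : (0:ℝ) < P.θ := lt_of_lt_of_le (by norm_num) P.hθ1
    positivity
  obtain ⟨z, hz, hdz⟩ := P.e_lt_add s w hpos
  exact ⟨z, hz, hdz⟩

lemma wwf : WellFounded (WellOrderingRel : X → X → Prop) :=
  (WellOrderingRel.isWellOrder).toIsWellFounded.wf

lemma min_congr {S T : Set X} (h : S = T) (hS : S.Nonempty) (hT : T.Nonempty) :
    WellFounded.min wwf S hS = WellFounded.min wwf T hT := by subst h; rfl

/-- the parent of a point, one level up -/
noncomputable def pa (s : ℤ) (w : X) : X :=
  WellFounded.min wwf (P.adm s w) (P.adm_nonempty s w)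

lemma pa_mem (s : ℤ) (w : X) : P.pa s w ∈ P.adm s w :=
  WellFounded.min_mem _ _ _

lemma pa_congr (s : ℤ) {w w' : X} (h : P.adm s w = P.adm s w') : P.pa s w = P.pa s w' :=
  min_congr h _ _

/-- candidate centres at level `s` for the thread of `x` -/
def T (s : ℤ) (x : X) : Set X := {z | z ∈ P.A s ∧ dist x z ≤ P.e s x + (11/20) * δ ^ s}

lemma T_nonempty (s : ℤ) (x : X) : (P.T s x).Nonempty := by
  have hpos : 0 < (11/20) * δ ^ s := by have h0 := P.hΛ s; positivity
  obtain ⟨z, hz, hdz⟩ := P.e_lt_add s x hpos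
  exact ⟨z, hz, le_of_lt hdz⟩

lemma T_subset (s : ℤ) (x : X) : P.T s x ⊆ {z ∈ P.A s | dist x z < (17/10) * δ ^ s} := by
  intro z hz
  refine ⟨hz.1, lt_of_le_of_lt hz.2 ?_⟩
  have h1 := P.e_lt s x
  have h2 := P.hΛ s
  linarith

lemma T_finite (s : ℤ) (x : X) : (P.T s x).Finite := by
  have h := sep_count P.hGD (P.hsep s) x ((17/10) * δ ^ s) 2
    (by have h0 := P.hΛ s; norm_num; nlinarith)
  exact h.1.subset (P.T_subset s x)

lemma T_step (s : ℤ) (x : X) : ∀ z ∈ P.T (s+1) x, P.pa s z ∈ P.T s x := by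
  intro z hz
  obtain ⟨hzA, hzd⟩ := hz
  obtain ⟨hpA, hpd⟩ := P.pa_mem s z
  have hΛ := P.hΛ s
  have hΛ1 := P.hΛ (s+1)
  have he1 : P.e (s+1) x < δ ^ (s+1) := P.e_lt (s+1) x
  have hdxz : dist x z < (31/20) * δ ^ (s+1) := by linarith
  have hez : P.e s z ≤ P.e s x + dist x z := by
    have := P.e_lip s z x
    rwa [dist_comm z x] at this
  refine ⟨hpA, ?_⟩
  have h1 : dist x (P.pa s z) ≤ dist x z + dist z (P.pa s z) := dist_triangle _ _ _
  have hsucc : δ ^ (s+1) = δ ^ s * δ := P.hΛsucc s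
  have hδ1 := P.hδ1
  have hδ0 := P.hδ0
  have hθ2 := P.hθ2
  -- dist x (pa) ≤ e s x + 2 * dist x z + θ Λ ≤ e s x + (11/20) Λ
  have key : 2 * dist x z + P.θ * δ ^ s ≤ (11/20) * δ ^ s := by
    have h2 : dist x z < (31/20) * (δ ^ s * δ) := by rwa [hsucc] at hdxz
    have h3 : δ ^ s * δ ≤ δ ^ s * (1/336) := by
      apply mul_le_mul_of_nonneg_left hδ1 (le_of_lt hΛ)
    nlinarith
  linarith

/-- iterated parents: `Iter q s w` maps a point at level `s+q` down to level `s` -/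
noncomputable def Iter (q : ℕ) : ℤ → X → X :=
  q.rec (fun _ w => w) (fun _ ih s w => P.pa s (ih (s+1) w))

lemma Iter_zero (s : ℤ) (w : X) : P.Iter 0 s w = w := rfl

lemma Iter_succ (q : ℕ) (s : ℤ) (w : X) : P.Iter (q+1) s w = P.pa s (P.Iter q (s+1) w) := rfl

lemma Iter_mem (q : ℕ) : ∀ (s : ℤ) (x w : X), w ∈ P.T (s + q) x → P.Iter q s w ∈ P.T s x := by
  induction q with
  | zero => intro s x w hw; simpa [P.Iter_zero] using hw
  | succ q ih =>
      intro s x w hw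
      have harith : s + ((q:ℤ) + 1) = (s + 1) + q := by ring
      have hw' : w ∈ P.T ((s+1) + q) x := by
        have : ((q+1 : ℕ) : ℤ) = (q:ℤ) + 1 := by push_cast; ring
        rw [this, harith] at hw; exact hw
      exact P.T_step s x _ (ih (s+1) x w hw')

lemma exists_thread (x : X) : ∃ g : ℤ → X,
    (∀ s, g s ∈ P.T s x) ∧ ∀ s, P.pa s (g (s+1)) = g s := by
  classical
  choose pick hpick using P.T_nonempty
  set gN : ℕ → ℤ → X := fun N s =>
    if h : s ≤ (N:ℤ) then P.Iter (N - s).toNat s (pick N x) else pick s x with hgN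
  have hmem : ∀ N s, gN N s ∈ P.T s x := by
    intro N s
    by_cases h : s ≤ (N:ℤ)
    · simp only [hgN, dif_pos h]
      apply P.Iter_mem
      have harith : s + (((N:ℤ) - s).toNat : ℤ) = (N:ℤ) := by omega
      rw [harith]; exact hpick N x
    · simp only [hgN, dif_neg h]; exact hpick s x
  have hcompat : ∀ (N : ℕ) (s : ℤ), s + 1 ≤ (N:ℤ) → P.pa s (gN N (s+1)) = gN N s := by
    intro N s h
    have hs : s ≤ (N:ℤ) := by omega
    simp only [hgN, dif_pos h, dif_pos hs]
    have hq : ((N:ℤ) - s).toNat = ((N:ℤ) - (s+1)).toNat + 1 := by omega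
    rw [hq]
    exact (P.Iter_succ _ _ _).symm
  set U := Filter.hyperfilter ℕ with hUdef
  have hU : ∀ s : ℤ, ∃ v ∈ P.T s x, {N | gN N s = v} ∈ U := by
    intro s
    obtain ⟨v, hv1, hv2⟩ := ult_exists U ((P.T_finite s x).toFinset) (fun N => gN N s)
      (by
        have : {n : ℕ | gN n s ∈ (P.T_finite s x).toFinset} = Set.univ := by
          ext N; simp only [Set.mem_setOf_eq, Set.mem_univ, iff_true, Set.Finite.mem_toFinset]
          exact hmem N s
        rw [this]; exact Filter.univ_mem)
    exact ⟨v, (P.T_finite s x).mem_toFinset.1 hv1, hv2⟩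
  choose g hgT hgU using hU
  refine ⟨g, hgT, ?_⟩
  intro s
  have h3 : {N : ℕ | s + 1 ≤ (N:ℤ)} ∈ U := by
    apply Filter.mem_hyperfilter_of_finite_compl
    apply Set.Finite.subset (Set.finite_Iic ((s+1).toNat))
    intro N hN
    simp only [Set.mem_compl_iff, Set.mem_setOf_eq, not_le] at hN
    simp only [Set.mem_Iic]
    omega
  have hint : ({N | gN N s = g s} ∩ ({N | gN N (s+1) = g (s+1)} ∩ {N : ℕ | s + 1 ≤ (N:ℤ)}))
      ∈ U := Filter.inter_mem (hgU s) (Filter.inter_mem (hgU (s+1)) h3)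
  obtain ⟨N, hN1, hN2, hN3⟩ := Ultrafilter.nonempty_of_mem hint
  rw [← hN1, ← hN2]
  exact hcompat N s hN3

/-- the thread of a point: its选 centre at each level -/
noncomputable def f (x : X) : ℤ → X := (P.exists_thread x).choose

lemma f_mem (x : X) (s : ℤ) : P.f x s ∈ P.T s x := (P.exists_thread x).choose_spec.1 s

lemma f_A (x : X) (s : ℤ) : P.f x s ∈ P.A s := (P.f_mem x s).1

lemma f_dist (x : X) (s : ℤ) : dist x (P.f x s) ≤ P.e s x + (11/20) * δ ^ s :=
  (P.f_mem x s).2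

lemma f_step (x : X) (s : ℤ) : P.pa s (P.f x (s+1)) = P.f x s :=
  (P.exists_thread x).choose_spec.2 s

lemma f_iter (x : X) (q : ℕ) : ∀ s : ℤ, P.Iter q s (P.f x (s + q)) = P.f x s := by
  induction q with
  | zero => intro s; rw [P.Iter_zero]; exact congrArg (P.f x) (by push_cast; ring)
  | succ q ih =>
      intro s
      have harith : s + ((q:ℤ) + 1) = (s + 1) + q := by ring
      have h1 : ((q+1 : ℕ) : ℤ) = (q:ℤ) + 1 := by push_cast; ring
      calc P.Iter (q+1) s (P.f x (s + (q+1:ℕ)))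
          = P.pa s (P.Iter q (s+1) (P.f x ((s+1) + q))) := by
            rw [show P.f x (s + (q+1:ℕ)) = P.f x ((s+1) + q) from congrArg (P.f x) (by push_cast; ring)]
            exact P.Iter_succ q s _
        _ = P.pa s (P.f x (s+1)) := by rw [ih (s+1)]
        _ = P.f x s := P.f_step x s

end Setup
end Adj

namespace Adj
namespace Setup

variable {X : Type} [MetricSpace X] {δ : ℝ} {M : ℕ} (P : Setup X δ M)

/-- the cube of level `s` with centre `z`: fiber of the thread map -/
noncomputable def cube (s : ℤ) (z : X) : Set X := {y | P.f y s = z}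

lemma mem_cube_iff {s : ℤ} {z y : X} : y ∈ P.cube s z ↔ P.f y s = z := Iff.rfl

lemma cube_subset_of_le {k l : ℤ} (hkl : k ≤ l) (x : X) :
    P.cube l (P.f x l) ⊆ P.cube k (P.f x k) := by
  intro y hy
  have hy' : P.f y l = P.f x l := hy
  have hq : k + (((l - k).toNat : ℕ) : ℤ) = l := by omega
  show P.f y k = P.f x k
  rw [← P.f_iter y ((l - k).toNat) k, ← P.f_iter x ((l - k).toNat) k, hq, hy']

lemma ball_subset_cube {s : ℤ} {z : X} (hz : z ∈ P.A s) :
    ball z (δ ^ s / 5) ⊆ P.cube s z := by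
  intro x hx
  rw [mem_ball] at hx
  set w := P.f x (s+1) with hw
  have hΛ := P.hΛ s
  have hΛ1 := P.hΛ (s+1)
  have hsucc := P.hΛsucc s
  have hδ0 := P.hδ0
  have hδ1 := P.hδ1
  have hθ1 := P.hθ1
  have hθ2 := P.hθ2
  have hxw : dist x w < (31/20) * (δ ^ s * δ) := by
    have h1 := P.f_dist x (s+1)
    have h2 := P.e_lt (s+1) x
    rw [← hw] at h1
    rw [hsucc] at h1 h2
    linarith
  have hwz : dist w z < (1/5) * δ ^ s + (31/20) * (δ ^ s * δ) := by
    calc dist w z ≤ dist w x + dist x z := dist_triangle _ _ _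
      _ < (31/20) * (δ ^ s * δ) + δ ^ s / 5 := by
          rw [dist_comm w x]; exact add_lt_add hxw hx
      _ = (1/5) * δ ^ s + (31/20) * (δ ^ s * δ) := by ring
  have hδs : δ ^ s * δ ≤ δ ^ s * (1/336) :=
    mul_le_mul_of_nonneg_left hδ1 (le_of_lt hΛ)
  -- z is in adm s w
  have hze : dist w z ≤ P.e s w := by
    by_contra hcon
    push_neg at hcon
    have hcon' : infDist w (P.A s) < dist w z := hcon
    obtain ⟨z'', hz'', hd⟩ := (infDist_lt_iff (P.A_nonempty s w)).1 hcon'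
    by_cases hzz : z'' = z
    · subst hzz; exact absurd hd (lt_irrefl _)
    · have hsep := P.hsep s z hz z'' hz'' (fun h => hzz h.symm)
      have h4 : dist z z'' ≤ dist z w + dist w z'' := dist_triangle _ _ _
      rw [dist_comm z w] at h4
      nlinarith
  have hzadm : z ∈ P.adm s w := by
    refine ⟨hz, ?_⟩
    have : (0:ℝ) < P.θ * δ ^ s := by
      have : (0:ℝ) < P.θ := by linarith
      positivity
    linarith
  -- every admissible parent equals z
  have huniq : ∀ z' ∈ P.adm s w, z' = z := by
    intro z' hz'
    by_contra hne
    have hsep := P.hsep s z hz z' hz'.1 (fun h => hne h.symm)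
    have hez : P.e s w ≤ dist w z := P.e_le s w z hz
    have h5 : dist z z' ≤ dist z w + dist w z' := dist_triangle _ _ _
    have h6 : dist w z' < P.e s w + P.θ * δ ^ s := hz'.2
    rw [dist_comm z w] at h5
    nlinarith
  show P.f x s = z
  rw [← P.f_step x s]
  exact huniq _ (P.pa_mem s w)

lemma cube_subset_ball {s : ℤ} {z : X} (hz : z ∈ P.A s) :
    P.cube s z ⊆ ball z (3 * δ ^ s) := by
  intro x hx
  have hx' : P.f x s = z := hx
  rw [mem_ball]
  have h1 := P.f_dist x s
  rw [hx'] at h1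
  have h2 := P.e_lt s x
  have hΛ := P.hΛ s
  linarith

/-- the serving lemma: if no frontier threshold is within reach of `x` at level `s`,
then a whole ball around `x` lies in the cube of `x` of level `s`. -/
lemma serve (x : X) (s : ℤ) (ρ : ℝ) (hρ0 : 0 < ρ) (hρ : ρ < δ * δ ^ s)
    (good : ∀ z ∈ P.A s, (51/10) * δ * δ ^ s < |dist x z - P.e s x - P.θ * δ ^ s|) :
    ball x ρ ⊆ P.cube s (P.f x s) := by
  have hΛ := P.hΛ s
  have hΛ1 := P.hΛ (s+1)
  have hsucc := P.hΛsucc s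
  have hδ0 := P.hδ0
  have hδ1 := P.hδ1
  have hyw : ∀ y ∈ ball x ρ, dist x (P.f y (s+1)) < (51/20) * δ * δ ^ s := by
    intro y hy
    rw [mem_ball, dist_comm] at hy
    have h1 := P.f_dist y (s+1)
    have h2 := P.e_lt (s+1) y
    rw [hsucc] at h1 h2
    calc dist x (P.f y (s+1)) ≤ dist x y + dist y (P.f y (s+1)) := dist_triangle _ _ _
      _ < ρ + (31/20) * (δ ^ s * δ) := by linarith
      _ < (51/20) * δ * δ ^ s := by nlinarith
  have hadm : ∀ y ∈ ball x ρ,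
      P.adm s (P.f y (s+1)) = {z | z ∈ P.A s ∧ dist x z < P.e s x + P.θ * δ ^ s} := by
    intro y hy
    set w := P.f y (s+1) with hwdef
    have hd : dist x w < (51/20) * δ * δ ^ s := hyw y hy
    have hew1 : P.e s w ≤ P.e s x + dist x w := by
      have := P.e_lip s w x; rwa [dist_comm w x] at this
    have hew2 : P.e s x ≤ P.e s w + dist x w := P.e_lip s x w
    ext z
    simp only [adm, Set.mem_setOf_eq]
    constructor
    · rintro ⟨hzA, hzd⟩
      refine ⟨hzA, ?_⟩
      have hg := good z hzA
      rcases lt_or_ge (dist x z) (P.e s x + P.θ * δ ^ s) with h | h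
      · exact h
      · exfalso
        have habs : dist x z - P.e s x - P.θ * δ ^ s > (51/10) * δ * δ ^ s := by
          rw [abs_of_nonneg (by linarith)] at hg; exact hg
        have h7 : dist w z ≥ dist x z - dist x w := by
          have := dist_triangle x w z
          rw [dist_comm x w] at this
          linarith [dist_triangle x w z]
        nlinarith
    · rintro ⟨hzA, hzd⟩
      refine ⟨hzA, ?_⟩
      have hg := good z hzA
      have habs : P.e s x + P.θ * δ ^ s - dist x z > (51/10) * δ * δ ^ s := by
        rw [abs_of_nonpos (by linarith)] at hg; linarith
      have h7 : dist w z ≤ dist x z + dist x w := by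
        have := dist_triangle w x z
        rw [dist_comm w x] at this
        linarith
      nlinarith
  intro y hy
  have hx0 : x ∈ ball x ρ := mem_ball_self hρ0
  show P.f y s = P.f x s
  rw [← P.f_step y s, ← P.f_step x s]
  exact P.pa_congr s ((hadm y hy).trans (hadm x hx0).symm)

lemma A_countable (s : ℤ) : (P.A s).Countable := by
  rcases isEmpty_or_nonempty X with h | h
  · have : P.A s = ∅ := Set.eq_empty_of_isEmpty _
    rw [this]; exact Set.countable_empty
  · obtain ⟨x₀⟩ := h
    have hcover : P.A s = ⋃ (m : ℕ), {z ∈ P.A s | dist x₀ z < (m:ℝ)} := by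
      ext z
      simp only [Set.mem_iUnion, Set.mem_setOf_eq]
      constructor
      · intro hzA
        obtain ⟨m, hm⟩ := exists_nat_gt (dist x₀ z)
        exact ⟨m, hzA, hm⟩
      · rintro ⟨m, hm, _⟩; exact hm
    rw [hcover]
    apply Set.countable_iUnion
    intro m
    obtain ⟨j, hj⟩ := pow_unbounded_of_one_lt (2 * (m:ℝ) / δ ^ s) (by norm_num : (1:ℝ) < 2)
    have hΛ := P.hΛ s
    have hcond : 2 * (m:ℝ) ≤ 2 ^ j * δ ^ s := by
      rw [div_lt_iff₀ hΛ] at hj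
      linarith
    exact ((sep_count P.hGD (P.hsep s) x₀ (m:ℝ) j hcond).1).countable

/-- the dyadic system associated to a setup -/
noncomputable def system : DyadicSystem X δ where
  idx := P.A
  cube := P.cube
  countable := P.A_countable
  separated := P.hsep
  maximal := P.hmax
  covers := by
    intro k
    rw [Set.eq_univ_iff_forall]
    intro x
    exact Set.mem_iUnion₂.2 ⟨P.f x k, P.f_A x k, rfl⟩
  tree := by
    intro k l z w hz hw
    by_cases hne : (P.cube k z ∩ P.cube l w).Nonempty
    · obtain ⟨x, hx1, hx2⟩ := hne
      have hxk : P.f x k = z := hx1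
      have hxl : P.f x l = w := hx2
      rcases le_or_gt k l with hkl | hkl
      · right; right
        rw [← hxk, ← hxl]
        exact P.cube_subset_of_le hkl x
      · right; left
        rw [← hxk, ← hxl]
        exact P.cube_subset_of_le (le_of_lt hkl) x
    · left
      exact Set.not_nonempty_iff_eq_empty.1 hne
  ball_subset := fun k z hz => P.ball_subset_cube hz
  subset_ball := fun k z hz => P.cube_subset_ball hz
  union_descendants := by
    intro k m z hz
    ext x
    constructor
    · intro hx
      have hxk : P.f x k = z := hx
      refine Set.mem_iUnion₂.2 ⟨P.f x (k + (m:ℤ)), ⟨P.f_A _ _, ?_⟩, rfl⟩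
      have h1 : P.cube (k + (m:ℤ)) (P.f x (k + (m:ℤ))) ⊆ P.cube k (P.f x k) :=
        P.cube_subset_of_le (by omega) x
      rwa [hxk] at h1
    · intro hx
      obtain ⟨w, hw, hxw⟩ := Set.mem_iUnion₂.1 hx
      exact hw.2 hxw

end Setup
end Adj

namespace Adj

variable {X : Type} [MetricSpace X]

/-- trivial dyadic system on a subsingleton space -/
noncomputable def trivialSystem [Subsingleton X] (δ : ℝ) (hδ0 : 0 < δ) : DyadicSystem X δ where
  idx _ := Set.univ
  cube _ _ := Set.univ
  countable _ := Set.countable_univ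
  separated := fun _ z _ w _ hzw => absurd (Subsingleton.elim z w) hzw
  maximal := fun k x => ⟨x, Set.mem_univ x, by rw [dist_self]; exact zpow_pos hδ0 k⟩
  covers := fun k => Set.eq_univ_iff_forall.2
    (fun x => Set.mem_iUnion₂.2 ⟨x, Set.mem_univ x, Set.mem_univ x⟩)
  tree := fun _ _ _ _ _ _ => Or.inr (Or.inl (Set.subset_univ _))
  ball_subset := fun _ _ _ => Set.subset_univ _
  subset_ball := fun k z _ x _ => by
    rw [mem_ball, Subsingleton.elim x z, dist_self]
    have := zpow_pos hδ0 k; linarith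
  union_descendants := by
    intro k m z _
    refine (Set.eq_univ_iff_forall.2 fun x => Set.mem_iUnion₂.2
      ⟨x, ⟨Set.mem_univ x, Set.subset_univ _⟩, Set.mem_univ x⟩).symm

open scoped Classical in
/-- counting the bad indices for one (point, level) pair -/
lemma bad_card {δ : ℝ} {M K : ℕ} (hδ0 : 0 < δ) (hδ1 : δ ≤ 1/336)
    (hGD : GeomDoubling X M) {A : ℤ → Set X}
    (hsep : ∀ s : ℤ, ∀ z ∈ A s, ∀ w ∈ A s, z ≠ w → δ ^ s ≤ dist z w)
    (hmax : ∀ (s : ℤ) (x : X), ∃ z ∈ A s, dist x z < δ ^ s)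
    (θf : Fin K → ℝ) (hθspread : ∀ ω ω' : Fin K, ω ≠ ω' → (51/5)*δ < |θf ω - θf ω'|)
    (hθub : ∀ ω, θf ω ≤ 1/2) (y : X) (s : ℤ) :
    (Finset.univ.filter (fun ω : Fin K =>
      ¬ ∀ z ∈ A s, (51/10)*δ*δ^s < |dist y z - infDist y (A s) - θf ω * δ^s|)).card ≤ M^2 := by
  classical
  set Λ := δ ^ s with hΛdef
  have hΛ : 0 < Λ := zpow_pos hδ0 s
  have hE : infDist y (A s) < Λ := by
    obtain ⟨z, hz, hdz⟩ := hmax s y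
    exact lt_of_le_of_lt (infDist_le_dist_of_mem hz) hdz
  have hEnn : 0 ≤ infDist y (A s) := infDist_nonneg
  obtain ⟨hfin, hcard⟩ := sep_count hGD (hsep s) y ((17/10)*Λ) 2 (by nlinarith)
  set badF := Finset.univ.filter (fun ω : Fin K =>
      ¬ ∀ z ∈ A s, (51/10)*δ*δ^s < |dist y z - infDist y (A s) - θf ω * δ^s|) with hbadF
  have hwit : ∀ ω ∈ badF, ∃ z, z ∈ A s ∧
      |dist y z - infDist y (A s) - θf ω * Λ| ≤ (51/10)*δ*Λ := by
    intro ω hω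
    rw [hbadF, Finset.mem_filter] at hω
    push_neg at hω
    obtain ⟨z, hz, hle⟩ := hω.2
    exact ⟨z, hz, hle⟩
  choose wit hwitA hwitle using hwit
  set g : Fin K → X := fun ω => if h : ω ∈ badF then wit ω h else y with hg
  have hmem : ∀ ω ∈ badF, g ω ∈ hfin.toFinset := by
    intro ω hω
    rw [Set.Finite.mem_toFinset]
    have h1 := hwitA ω hω
    have h2 := hwitle ω hω
    have h3 := abs_le.1 h2
    have hub := hθub ω
    refine ⟨by rw [hg]; simp only [dif_pos hω]; exact h1, ?_⟩
    rw [hg]; simp only [dif_pos hω]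
    have hδΛ : δ * Λ ≤ (1/336) * Λ := by nlinarith
    nlinarith [h3.2]
  have hinj : Set.InjOn g (badF : Set (Fin K)) := by
    intro ω hω ω' hω' heq
    by_contra hne
    rw [Finset.mem_coe] at hω hω'
    have h1 := hwitle ω hω
    have h2 := hwitle ω' hω'
    have hz : wit ω hω = wit ω' hω' := by
      have e1 : g ω = wit ω hω := by rw [hg]; simp only [dif_pos hω]
      have e2 : g ω' = wit ω' hω' := by rw [hg]; simp only [dif_pos hω']
      rw [← e1, ← e2, heq]
    rw [hz] at h1
    have hdiff : |θf ω - θf ω'| * Λ ≤ 2 * ((51/10)*δ*Λ) := by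
      have hrw : (θf ω - θf ω') * Λ = (dist y (wit ω' hω') - infDist y (A s) - θf ω' * Λ)
          - (dist y (wit ω' hω') - infDist y (A s) - θf ω * Λ) := by ring
      have habs : |(θf ω - θf ω') * Λ| ≤ 2 * ((51/10)*δ*Λ) := by
        rw [hrw]
        calc |(dist y (wit ω' hω') - infDist y (A s) - θf ω' * Λ)
              - (dist y (wit ω' hω') - infDist y (A s) - θf ω * Λ)|
            ≤ |dist y (wit ω' hω') - infDist y (A s) - θf ω' * Λ|
              + |dist y (wit ω' hω') - infDist y (A s) - θf ω * Λ| := abs_sub _ _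
          _ ≤ (51/10)*δ*Λ + (51/10)*δ*Λ := add_le_add h2 h1
          _ = 2 * ((51/10)*δ*Λ) := by ring
      rwa [abs_mul, abs_of_pos hΛ] at habs
    have hsp := hθspread ω ω' hne
    have : |θf ω - θf ω'| ≤ (51/5)*δ := by
      have h4 : |θf ω - θf ω'| * Λ ≤ ((51/5)*δ) * Λ := by linarith
      exact le_of_mul_le_mul_right h4 hΛ
    linarith
  calc badF.card ≤ hfin.toFinset.card := Finset.card_le_card_of_injOn g hmem hinj
    _ = _ := (Set.ncard_eq_toFinset_card _ hfin).symm
    _ ≤ M^2 := hcard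

lemma exists_level {δ : ℝ} (hδ0 : 0 < δ) (hδ1 : δ < 1) {Y : ℝ} (hY : 0 < Y) :
    ∃ k : ℤ, δ ^ k ≤ Y ∧ Y < δ ^ (k - 1) := by
  have hinv : 1 < δ⁻¹ := (one_lt_inv₀ hδ0).2 hδ1
  obtain ⟨m, hm1, hm2⟩ := exists_mem_Ico_zpow hY hinv
  refine ⟨-m, ?_, ?_⟩
  · have h : (δ⁻¹) ^ m = δ ^ (-m) := by rw [inv_zpow, ← zpow_neg]
    rwa [h] at hm1
  · have h : (δ⁻¹) ^ (m+1) = δ ^ (-m - 1) := by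
      rw [inv_zpow, ← zpow_neg, show -(m+1) = -m - 1 by ring]
    rwa [h] at hm2

end Adj

set_option maxHeartbeats 1000000 in
open scoped Classical in
/-- Adjacent dyadic systems: for a geometrically doubling space with constant `M`, `n ≥ 1` and
`δ < 1/(n·168·M⁸)`, there are `K` (depending only on `δ` and `M`) dyadic systems such that for
every `p ∈ ℕ` and all balls `B₁, …, B_n` there are `ω` and cubes `Q_{B_i} ∈ D(ω)` with
(i) `B_i ⊆ Q_{B_i}`; (ii) `ℓ(Q_{B_i}) ≤ δ⁻²·r(B_i)`; (iii) `δ⁻ᵖ·B_i` is contained in the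
ancestor of `Q_{B_i}` of `p` generations earlier. -/
theorem stmt6 (M n : ℕ) (hn : 1 ≤ n) (δ : ℝ) (hδ0 : 0 < δ)
    (hδ : δ < 1 / (n * 168 * M ^ 8)) :
    ∃ K : ℕ, ∀ (X : Type) [MetricSpace X], GeomDoubling X M →
      ∃ DS : Fin K → DyadicSystem X δ,
        ∀ (p : ℕ) (x : Fin n → X) (r : Fin n → ℝ), (∀ i, 0 < r i) →
          ∃ (ω : Fin K) (k : Fin n → ℤ) (c : Fin n → X),
            ∀ i : Fin n,
              c i ∈ (DS ω).idx (k i) ∧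
              ball (x i) (r i) ⊆ (DS ω).cube (k i) (c i) ∧
              δ ^ (k i) ≤ δ ^ (-2 : ℤ) * r i ∧
              ∃ c' ∈ (DS ω).idx (k i - (p : ℤ)),
                (DS ω).cube (k i) (c i) ⊆ (DS ω).cube (k i - (p : ℤ)) c' ∧
                ball (x i) (δ ^ (-(p : ℤ)) * r i) ⊆ (DS ω).cube (k i - (p : ℤ)) c' := by
  classical
  refine ⟨8 * n * M ^ 2, ?_⟩
  intro X _ hGD
  rcases Nat.lt_or_ge M 2 with hM1 | hM2
  · -- degenerate cases M = 0, 1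
    interval_cases M
    · exfalso
      norm_num at hδ
      linarith
    · -- M = 1 : the space is a subsingleton
      haveI := Adj.subsingleton_of_geomDoubling_one hGD
      have hδlt1 : δ < 1 := by
        have hnR : (1:ℝ) ≤ (n:ℝ) := by exact_mod_cast hn
        have hden : (168:ℝ) ≤ (n:ℝ) * 168 * (1:ℕ) ^ 8 := by push_cast; nlinarith
        have hpos : (0:ℝ) < (n:ℝ) * 168 * (1:ℕ) ^ 8 := by push_cast; nlinarith
        have := lt_of_lt_of_le hδ (by
          apply one_div_le_one_div_of_le (by norm_num : (0:ℝ) < 168) hden)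
        linarith [this]
      refine ⟨fun _ => Adj.trivialSystem δ hδ0, ?_⟩
      intro p x r hr
      have hKpos : 0 < 8 * n * 1 ^ 2 := by omega
      have hlev : ∀ i, ∃ k : ℤ, δ ^ k ≤ δ^(-2:ℤ) * r i ∧ δ^(-2:ℤ) * r i < δ ^ (k - 1) :=
        fun i => Adj.exists_level hδ0 hδlt1 (mul_pos (zpow_pos hδ0 _) (hr i))
      choose k hk1 _ using hlev
      refine ⟨⟨0, hKpos⟩, k, x, fun i => ?_⟩
      exact ⟨Set.mem_univ _, Set.subset_univ _, hk1 i,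
        x i, Set.mem_univ _, Set.subset_univ _, Set.subset_univ _⟩
  · -- main case M ≥ 2
    have hM2R : (2:ℝ) ≤ (M:ℝ) := by exact_mod_cast hM2
    have hnR : (1:ℝ) ≤ (n:ℝ) := by exact_mod_cast hn
    have hM6 : (64:ℝ) ≤ (M:ℝ)^6 := by
      calc (64:ℝ) = 2^6 := by norm_num
        _ ≤ (M:ℝ)^6 := pow_le_pow_left₀ (by norm_num) hM2R 6
    have hM8 : (256:ℝ) ≤ (M:ℝ)^8 := by
      calc (256:ℝ) = 2^8 := by norm_num
        _ ≤ (M:ℝ)^8 := pow_le_pow_left₀ (by norm_num) hM2R 8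
    have hden : (0:ℝ) < (n:ℝ) * 168 * (M:ℝ)^8 := by nlinarith
    have hδden : δ * ((n:ℝ) * 168 * (M:ℝ)^8) < 1 := by
      have h := (lt_div_iff₀ hden).1 (by exact_mod_cast hδ)
      linarith
    have hδ336 : δ ≤ 1/336 := by
      have h1 : (336:ℝ) ≤ (n:ℝ) * 168 * (M:ℝ)^8 := by nlinarith
      nlinarith
    have hδlt1 : δ < 1 := by linarith
    -- maximal separated sets, shared by all the systems
    have hAex : ∀ s : ℤ, ∃ A : Set X, (∀ z ∈ A, ∀ w ∈ A, z ≠ w → δ^s ≤ dist z w) ∧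
        (∀ x : X, ∃ z ∈ A, dist x z < δ^s) := fun s =>
      Adj.exists_maximal_separated (δ^s) (zpow_pos hδ0 s)
    choose A hA1 hA2 using hAex
    set K := 8 * n * M ^ 2 with hK
    have hKpos : 0 < K := by
      have h1 : 0 < M ^ 2 := Nat.pow_pos (by omega)
      have h2 : 0 < 8 * n := by omega
      exact Nat.mul_pos h2 h1
    have hKR : (0:ℝ) < (K:ℝ) := by exact_mod_cast hKpos
    have hKval : (K:ℝ) = 8 * (n:ℝ) * (M:ℝ)^2 := by rw [hK]; push_cast; ring
    -- the threshold family
    set θf : Fin K → ℝ := fun ω => 1/10 + (2/5) * (((ω:ℕ):ℝ)+1) / K with hθf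
    have hθ1 : ∀ ω, 1/10 ≤ θf ω := by
      intro ω
      have h : (0:ℝ) ≤ (2/5) * (((ω:ℕ):ℝ)+1) / K := by positivity
      simp only [hθf]; linarith
    have hθ2 : ∀ ω, θf ω ≤ 1/2 := by
      intro ω
      have hωK : (((ω:ℕ):ℝ)+1) ≤ K := by
        have := ω.isLt
        have h : ((ω:ℕ):ℕ) + 1 ≤ K := this
        exact_mod_cast h
      have h2 : (2/5) * (((ω:ℕ):ℝ)+1) / K ≤ 2/5 := by
        rw [div_le_iff₀ hKR]
        nlinarith
      simp only [hθf]; linarith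
    have hnum : 51 * (δ * (K:ℝ)) < 2 := by
      have h8 : (M:ℝ)^8 = (M:ℝ)^6 * (M:ℝ)^2 := by ring
      have hnn : (0:ℝ) ≤ δ * (n:ℝ) * (M:ℝ)^2 := by positivity
      have key : δ * ((n:ℝ) * 168 * ((M:ℝ)^6 * (M:ℝ)^2)) < 1 := by rw [← h8]; exact hδden
      have h64 : 168 * 64 * (δ * (n:ℝ) * (M:ℝ)^2) ≤
          δ * ((n:ℝ) * 168 * ((M:ℝ)^6 * (M:ℝ)^2)) := by nlinarith
      rw [hKval]
      nlinarith
    have hθspread : ∀ ω ω' : Fin K, ω ≠ ω' → (51/5)*δ < |θf ω - θf ω'| := by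
      intro ω ω' hne
      have hdiff : θf ω - θf ω' = (2/5) * (((ω:ℕ):ℝ) - ((ω':ℕ):ℝ)) / K := by
        simp only [hθf]; field_simp; ring
      have hge : (1:ℝ) ≤ |((ω:ℕ):ℝ) - ((ω':ℕ):ℝ)| := by
        have hnatne : (ω:ℕ) ≠ (ω':ℕ) := fun h => hne (Fin.ext h)
        have hzne : ((ω:ℕ):ℤ) ≠ ((ω':ℕ):ℤ) := by exact_mod_cast hnatne
        have h1 : (1:ℤ) ≤ |((ω:ℕ):ℤ) - ((ω':ℕ):ℤ)| := Int.one_le_abs (sub_ne_zero.2 hzne)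
        have h2 : ((1:ℤ):ℝ) ≤ ((|((ω:ℕ):ℤ) - ((ω':ℕ):ℤ)| : ℤ) : ℝ) := by exact_mod_cast h1
        push_cast at h2
        exact h2
      rw [hdiff, abs_div, abs_mul]
      rw [abs_of_pos hKR, abs_of_pos (by norm_num : (0:ℝ) < 2/5)]
      rw [lt_div_iff₀ hKR]
      calc (51/5)*δ * K < 2/5 := by nlinarith
        _ ≤ 2/5 * |((ω:ℕ):ℝ) - ((ω':ℕ):ℝ)| := by nlinarith
    -- the systems
    set PP : Fin K → Adj.Setup X δ M := fun ω =>
      ⟨hδ0, hδ336, hGD, A, hA1, hA2, θf ω, hθ1 ω, hθ2 ω⟩ with hPP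
    refine ⟨fun ω => (PP ω).system, ?_⟩
    intro p x r hr
    -- choice of levels
    have hlev : ∀ i, ∃ k : ℤ, δ ^ k ≤ δ^(-2:ℤ) * r i ∧ δ^(-2:ℤ) * r i < δ ^ (k - 1) :=
      fun i => Adj.exists_level hδ0 hδlt1 (mul_pos (zpow_pos hδ0 _) (hr i))
    choose k hk1 hk2 using hlev
    have hrk : ∀ i, r i < δ * δ ^ (k i) := by
      intro i
      have h3 : δ^(2:ℤ) * (δ^(-2:ℤ) * r i) < δ^(2:ℤ) * δ^(k i - 1) :=
        mul_lt_mul_of_pos_left (hk2 i) (zpow_pos hδ0 2)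
      have e1 : δ^(2:ℤ) * (δ^(-2:ℤ) * r i) = r i := by
        rw [← mul_assoc, ← zpow_add₀ hδ0.ne']; norm_num
      have e2 : δ^(2:ℤ) * δ^(k i - 1) = δ * δ^(k i) := by
        rw [← zpow_add₀ hδ0.ne', show (2:ℤ) + (k i - 1) = k i + 1 by ring,
          zpow_add_one₀ hδ0.ne']
        ring
      rw [e1, e2] at h3; exact h3
    have hrkp : ∀ i, δ^(-(p:ℤ)) * r i < δ * δ ^ (k i - (p:ℤ)) := by
      intro i
      have h := mul_lt_mul_of_pos_left (hrk i) (zpow_pos hδ0 (-(p:ℤ)))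
      have e : δ^(-(p:ℤ)) * (δ * δ^(k i)) = δ * δ^(k i - (p:ℤ)) := by
        rw [show k i - (p:ℤ) = -(p:ℤ) + k i by ring, zpow_add₀ hδ0.ne']
        ring
      rw [e] at h; exact h
    -- bad indices
    set Good : X → ℤ → Fin K → Prop := fun y s ω =>
      ∀ z ∈ A s, (51/10)*δ*δ^s < |dist y z - infDist y (A s) - θf ω * δ^s| with hGoodDef
    set bad : X → ℤ → Finset (Fin K) :=
      fun y s => Finset.univ.filter (fun ω => ¬ Good y s ω) with hbad
    have hbadcard : ∀ (y : X) (s : ℤ), (bad y s).card ≤ M^2 := fun y s =>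
      Adj.bad_card hδ0 hδ336 hGD hA1 hA2 θf hθspread hθ2 y s
    set All : Finset (Fin K) := Finset.univ.biUnion
      (fun i : Fin n => bad (x i) (k i) ∪ bad (x i) (k i - (p:ℤ))) with hAll
    have hAllcard : All.card ≤ n * (2 * M^2) := by
      calc All.card ≤ ∑ i : Fin n, (bad (x i) (k i) ∪ bad (x i) (k i - (p:ℤ))).card :=
            Finset.card_biUnion_le
        _ ≤ ∑ _i : Fin n, 2 * M^2 := Finset.sum_le_sum (fun i _ => by
            calc (bad (x i) (k i) ∪ bad (x i) (k i - (p:ℤ))).card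
                ≤ (bad (x i) (k i)).card + (bad (x i) (k i - (p:ℤ))).card :=
                  Finset.card_union_le _ _
              _ ≤ M^2 + M^2 := add_le_add (hbadcard _ _) (hbadcard _ _)
              _ = 2 * M^2 := by ring)
        _ = n * (2 * M^2) := by
            rw [Finset.sum_const, Finset.card_univ, Fintype.card_fin, smul_eq_mul]
    have hAlllt : All.card < K := by
      have hq : 0 < n * M ^ 2 := Nat.mul_pos (by omega) (Nat.pow_pos (by omega))
      have h1 : n * (2 * M^2) < K := by
        rw [hK]
        have e1 : n * (2 * M ^ 2) = 2 * (n * M ^ 2) := by ring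
        have e2 : 8 * n * M ^ 2 = 8 * (n * M ^ 2) := by ring
        rw [e1, e2]
        omega
      exact lt_of_le_of_lt hAllcard h1
    obtain ⟨ω, hω⟩ : ∃ ω : Fin K, ω ∉ All := by
      by_contra hcon
      push_neg at hcon
      have hsub : (Finset.univ : Finset (Fin K)) ⊆ All := fun ω _ => hcon ω
      have hcard := Finset.card_le_card hsub
      rw [Finset.card_univ, Fintype.card_fin] at hcard
      omega
    have hgood : ∀ i : Fin n, Good (x i) (k i) ω ∧ Good (x i) (k i - (p:ℤ)) ω := by
      intro i
      have h1 : ω ∉ bad (x i) (k i) ∪ bad (x i) (k i - (p:ℤ)) := fun hmem =>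
        hω (Finset.mem_biUnion.2 ⟨i, Finset.mem_univ i, hmem⟩)
      rw [Finset.mem_union] at h1
      push_neg at h1
      constructor
      · by_contra hng
        exact h1.1 (Finset.mem_filter.2 ⟨Finset.mem_univ ω, hng⟩)
      · by_contra hng
        exact h1.2 (Finset.mem_filter.2 ⟨Finset.mem_univ ω, hng⟩)
    refine ⟨ω, k, fun i => (PP ω).f (x i) (k i), fun i => ?_⟩
    obtain ⟨hg1, hg2⟩ := hgood i
    refine ⟨(PP ω).f_A (x i) (k i), ?_, hk1 i, ?_⟩
    · exact (PP ω).serve (x i) (k i) (r i) (hr i) (hrk i) hg1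
    · refine ⟨(PP ω).f (x i) (k i - (p:ℤ)), (PP ω).f_A _ _, ?_, ?_⟩
      · exact (PP ω).cube_subset_of_le (by omega : k i - (p:ℤ) ≤ k i) (x i)
      · exact (PP ω).serve (x i) (k i - (p:ℤ)) (δ^(-(p:ℤ)) * r i)
          (mul_pos (zpow_pos hδ0 _) (hr i)) (hrkp i) hg2
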